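/- Let n ≥ 1 be odd and let X be the 3-dimensional Banach space whose unit ball is the right prism with vertices (cos((j−1)π/n), sin((j−1)π/n), ±1), j = 1, …, 2n. The linear operator T determined by Tv_j = (−sin((j−1)π/n)·cos(π/(2n)), cos((j−1)π/n)·cos(π/(2n)), sin(π/(2n))) for v_j = (cos((j−1)π/n), sin((j−1)π/n), 1) has ‖T‖ = 1 and numerical radius v(T) = sin(π/(2n)). -/

import Mathlib

open Metric Set Real

private lemma absAdd19 {u γ : ℝ} (h1 : |u + γ| ≤ 1) (h2 : |u - γ| ≤ 1) : |u| + |γ| ≤ 1 := by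
  rw [abs_le] at h1 h2
  rcases abs_cases u with ⟨hu, _⟩ | ⟨hu, _⟩ <;> rcases abs_cases γ with ⟨hg, _⟩ | ⟨hg, _⟩ <;>
    rw [hu, hg] <;> linarith

private lemma finAngle19 (n : ℕ) (hn : 0 < n) (k : ℤ) :
    ∃ j : Fin (2 * n),
      Real.cos (((j : ℕ) : ℝ) * π / n) = Real.cos ((k : ℝ) * π / n) ∧
      Real.sin (((j : ℕ) : ℝ) * π / n) = Real.sin ((k : ℝ) * π / n) := by
  have h2n : (0 : ℤ) < 2 * n := by positivity
  have hr0 : 0 ≤ k % (2 * n) := Int.emod_nonneg k (by omega)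
  have hrlt : k % (2 * n) < 2 * n := Int.emod_lt_of_pos k h2n
  refine ⟨⟨(k % (2 * n)).toNat, by omega⟩, ?_, ?_⟩ <;>
  · have hcast : (((k % (2 * n)).toNat : ℕ) : ℝ) = (k : ℝ) - (k / (2 * n) : ℤ) * (2 * n) := by
      have h1 : (((k % (2 * n)).toNat : ℕ) : ℝ) = ((k % (2 * n) : ℤ) : ℝ) := by
        exact_mod_cast congrArg (Int.cast : ℤ → ℝ) (Int.toNat_of_nonneg hr0)
      rw [h1, Int.emod_def]
      push_cast
      ring
    have hang : (((k % (2 * n)).toNat : ℕ) : ℝ) * π / n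
        = (k : ℝ) * π / n - (k / (2 * n) : ℤ) * (2 * π) := by
      rw [hcast]
      have hn' : (n : ℝ) ≠ 0 := by positivity
      field_simp
    rw [hang]
    first
      | exact Real.cos_sub_int_mul_two_pi _ _
      | exact Real.sin_sub_int_mul_two_pi _ _

private lemma sinBound19 (n : ℕ) (hodd : Odd n) (j : ℕ) (hj : j < 2 * n) :
    |Real.sin ((j : ℝ) * π / n)| ≤ Real.cos (π / (2 * n)) := by
  obtain ⟨m, hm⟩ := hodd
  have hn : 0 < n := by omega
  have hπ := Real.pi_pos
  have hn' : (0:ℝ) < n := by exact_mod_cast hn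
  set φ := π / (2 * (n:ℝ)) with hφdef
  have hφ : 0 < φ := by positivity
  have hhalf : (n : ℝ) * φ = π / 2 := by rw [hφdef]; field_simp
  have hφle : φ ≤ π / 2 := by
    rw [hφdef]
    apply div_le_div_of_nonneg_left hπ.le (by norm_num)
    have : (1:ℝ) ≤ n := by exact_mod_cast hn
    linarith
  have hj0 : (0:ℝ) ≤ (j:ℝ) := Nat.cast_nonneg j
  have hkey : 0 ≤ Real.cos ((2 * (j:ℝ) + 1) * φ) * Real.cos ((2 * (j:ℝ) - 1) * φ) := by
    have hmono : ∀ a b : ℝ, a ≤ b → a * φ ≤ b * φ :=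
      fun a b hab => mul_le_mul_of_nonneg_right hab hφ.le
    rcases (by omega : 2 * j + 1 ≤ n ∨ (n + 2 ≤ 2 * j + 1 ∧ 2 * j + 1 ≤ 3 * n) ∨
        (3 * n + 2 ≤ 2 * j + 1 ∧ 2 * j + 2 ≤ 4 * n)) with h | h | h
    · have hc : (2 * (j:ℝ) + 1) ≤ n := by exact_mod_cast h
      have h1 : (2 * (j:ℝ) + 1) * φ ≤ (n:ℝ) * φ := hmono _ _ hc
      have h2 : (-1 : ℝ) * φ ≤ (2 * (j:ℝ) - 1) * φ := hmono _ _ (by linarith)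
      have h3 : (2 * (j:ℝ) - 1) * φ ≤ (2 * (j:ℝ) + 1) * φ := hmono _ _ (by linarith)
      have h0 : (0:ℝ) * φ ≤ (2 * (j:ℝ) + 1) * φ := hmono _ _ (by linarith)
      apply mul_nonneg <;>
      · apply Real.cos_nonneg_of_mem_Icc
        constructor <;> linarith [hhalf]
    · have hcl : (n:ℝ) + 2 ≤ 2 * (j:ℝ) + 1 := by exact_mod_cast h.1
      have hcr : 2 * (j:ℝ) + 1 ≤ 3 * (n:ℝ) := by exact_mod_cast h.2
      have h1 : (n:ℝ) * φ ≤ (2 * (j:ℝ) - 1) * φ := hmono _ _ (by linarith)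
      have h2 : (2 * (j:ℝ) + 1) * φ ≤ 3 * (n:ℝ) * φ := by
        have := hmono _ _ hcr
        linarith [this]
      have h3 : (2 * (j:ℝ) - 1) * φ ≤ (2 * (j:ℝ) + 1) * φ := hmono _ _ (by linarith)
      have hE3 : 3 * (n:ℝ) * φ = π + π / 2 := by
        rw [show 3 * (n:ℝ) * φ = 3 * ((n:ℝ) * φ) from by ring, hhalf]; ring
      have hb1 : Real.cos ((2 * (j:ℝ) + 1) * φ) ≤ 0 := by
        apply Real.cos_nonpos_of_pi_div_two_le_of_le <;> linarith [hhalf]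
      have hb2 : Real.cos ((2 * (j:ℝ) - 1) * φ) ≤ 0 := by
        apply Real.cos_nonpos_of_pi_div_two_le_of_le <;> linarith [hhalf]
      have := mul_nonneg (neg_nonneg.mpr hb1) (neg_nonneg.mpr hb2)
      rwa [neg_mul_neg] at this
    · have hcl : 3 * (n:ℝ) + 2 ≤ 2 * (j:ℝ) + 1 := by exact_mod_cast h.1
      have hcr : 2 * (j:ℝ) + 2 ≤ 4 * (n:ℝ) := by exact_mod_cast h.2
      have h1 : (3 * (n:ℝ) + 2) * φ ≤ (2 * (j:ℝ) + 1) * φ := hmono _ _ hcl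
      have h1' : 3 * (n:ℝ) * φ ≤ (2 * (j:ℝ) - 1) * φ := by
        have := hmono _ _ (show 3 * (n:ℝ) ≤ 2 * (j:ℝ) - 1 from by linarith)
        linarith [this]
      have h2 : (2 * (j:ℝ) + 1) * φ ≤ (4 * (n:ℝ) - 1) * φ := hmono _ _ (by linarith)
      have h3 : (2 * (j:ℝ) - 1) * φ ≤ (2 * (j:ℝ) + 1) * φ := hmono _ _ (by linarith)
      have hE3 : 3 * (n:ℝ) * φ = π + π / 2 := by
        rw [show 3 * (n:ℝ) * φ = 3 * ((n:ℝ) * φ) from by ring, hhalf]; ring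
      have hE1 : (3 * (n:ℝ) + 2) * φ = π + π / 2 + 2 * φ := by
        rw [show (3 * (n:ℝ) + 2) * φ = 3 * ((n:ℝ) * φ) + 2 * φ from by ring, hhalf]; ring
      have hE4 : (4 * (n:ℝ) - 1) * φ = 2 * π - φ := by
        rw [show (4 * (n:ℝ) - 1) * φ = 4 * ((n:ℝ) * φ) - φ from by ring, hhalf]; ring
      rw [← Real.cos_two_pi_sub ((2 * (j:ℝ) + 1) * φ),
        ← Real.cos_two_pi_sub ((2 * (j:ℝ) - 1) * φ)]
      apply mul_nonneg <;>
      · apply Real.cos_nonneg_of_mem_Icc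
        constructor <;> linarith [hhalf]
  have e1 : Real.sin ((j:ℝ) * π / n) ^ 2 = 1/2 - Real.cos (2 * ((j:ℝ) * π / n)) / 2 := by
    have h1 := Real.cos_sq ((j:ℝ) * π / n)
    have h2 := Real.sin_sq_add_cos_sq ((j:ℝ) * π / n)
    linarith
  have e2 : Real.cos φ ^ 2 = 1/2 + Real.cos (2 * φ) / 2 := Real.cos_sq φ
  have hA : (2 * ((j:ℝ) * π / n) + 2 * φ) / 2 = (2 * (j:ℝ) + 1) * φ := by
    rw [hφdef]; field_simp
  have hB : (2 * ((j:ℝ) * π / n) - 2 * φ) / 2 = (2 * (j:ℝ) - 1) * φ := by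
    rw [hφdef]; field_simp
  have e3 : Real.cos (2 * ((j:ℝ) * π / n)) + Real.cos (2 * φ) =
      2 * Real.cos ((2 * (j:ℝ) + 1) * φ) * Real.cos ((2 * (j:ℝ) - 1) * φ) := by
    rw [Real.cos_add_cos, hA, hB]
  have hsq : Real.sin ((j:ℝ) * π / n) ^ 2 ≤ Real.cos φ ^ 2 := by
    rw [e1, e2]; linarith
  have hcos0 : 0 ≤ Real.cos φ :=
    Real.cos_nonneg_of_mem_Icc ⟨by linarith, hφle⟩
  calc |Real.sin ((j:ℝ) * π / n)| = Real.sqrt (Real.sin ((j:ℝ) * π / n) ^ 2) :=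
        (Real.sqrt_sq_eq_abs _).symm
    _ ≤ Real.sqrt (Real.cos φ ^ 2) := Real.sqrt_le_sqrt hsq
    _ = Real.cos φ := Real.sqrt_sq hcos0

private def Mlm19 (c s : ℝ) : (Fin 3 → ℝ) →ₗ[ℝ] (Fin 3 → ℝ) where
  toFun := fun p => ![-(p 1) * c, p 0 * c, p 2 * s]
  map_add' := by
    intro p q; funext i; fin_cases i <;> simp <;> ring
  map_smul' := by
    intro r p; funext i; fin_cases i <;> simp <;> ring

private lemma Mlm19_apply (c s : ℝ) (p : Fin 3 → ℝ) :
    Mlm19 c s p = ![-(p 1) * c, p 0 * c, p 2 * s] := rfl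

private lemma vecDecomp19 (p : Fin 3 → ℝ) :
    p = p 0 • ![(1:ℝ),0,0] + p 1 • ![(0:ℝ),1,0] + p 2 • ![(0:ℝ),0,1] := by
  funext i; fin_cases i <;> simp

private lemma span19 (aθ : ℝ) (L M : (Fin 3 → ℝ) →ₗ[ℝ] (Fin 3 → ℝ))
    (hsa : Real.sin aθ ≠ 0) (hca : Real.cos aθ ≠ 1)
    (h0 : L ![1,0,1] = M ![1,0,1])
    (h1 : L ![Real.cos aθ, Real.sin aθ, 1] = M ![Real.cos aθ, Real.sin aθ, 1])
    (h2 : L ![Real.cos (2*aθ), Real.sin (2*aθ), 1] = M ![Real.cos (2*aθ), Real.sin (2*aθ), 1]) :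
    ∀ p, L p = M p := by
  have pyth : Real.sin aθ ^ 2 + Real.cos aθ ^ 2 = 1 := Real.sin_sq_add_cos_sq aθ
  have hD : 2 * Real.sin aθ * (1 - Real.cos aθ) ≠ 0 := by
    have h1c : 1 - Real.cos aθ ≠ 0 := fun h => hca (by linarith)
    positivity
  have hsm : ∀ (E : Fin 3 → ℝ) (c0 c1 c2 : ℝ),
      (2 * Real.sin aθ * (1 - Real.cos aθ)) • E =
        c0 • ![(1:ℝ),0,1] + c1 • ![Real.cos aθ, Real.sin aθ, 1]
          + c2 • ![Real.cos (2*aθ), Real.sin (2*aθ), 1] → L E = M E := by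
    intro E c0 c1 c2 hE
    have hL : (2 * Real.sin aθ * (1 - Real.cos aθ)) • L E
        = (2 * Real.sin aθ * (1 - Real.cos aθ)) • M E := by
      rw [← map_smul, ← map_smul, hE]
      simp only [map_add, map_smul, h0, h1, h2]
    exact smul_right_injective (Fin 3 → ℝ) hD hL
  have hB0 : L ![(1:ℝ),0,0] = M ![(1:ℝ),0,0] := by
    apply hsm _ (Real.sin aθ - Real.sin (2*aθ)) (Real.sin (2*aθ)) (-Real.sin aθ)
    funext i
    rw [Real.sin_two_mul, Real.cos_two_mul]
    fin_cases i <;> simp <;> ring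
  have hB1 : L ![(0:ℝ),1,0] = M ![(0:ℝ),1,0] := by
    apply hsm _ (Real.cos (2*aθ) - Real.cos aθ) (1 - Real.cos (2*aθ)) (Real.cos aθ - 1)
    funext i
    rw [Real.sin_two_mul, Real.cos_two_mul]
    fin_cases i <;> simp <;>
      first
        | ring
        | linear_combination (2 * Real.sin aθ) * pyth
        | linear_combination (-2 * Real.sin aθ) * pyth
  have hB2 : L ![(0:ℝ),0,1] = M ![(0:ℝ),0,1] := by
    apply hsm _ (2 * Real.sin aθ * (1 - Real.cos aθ) - (Real.sin aθ - Real.sin (2*aθ)))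
      (-Real.sin (2*aθ)) (Real.sin aθ)
    funext i
    rw [Real.sin_two_mul, Real.cos_two_mul]
    fin_cases i <;> simp <;> ring
  intro p
  rw [vecDecomp19 p]
  simp only [map_add, map_smul, hB0, hB1, hB2]


private lemma halfAngle19 (mh : ℝ) (hne : 2 * mh + 1 ≠ 0) (x : ℝ) :
    (x + mh) * π / (2 * mh + 1) = x * π / (2 * mh + 1) + π / 2 - π / (2 * (2 * mh + 1)) ∧
    (x + mh + 1) * π / (2 * mh + 1) = x * π / (2 * mh + 1) + π / 2 + π / (2 * (2 * mh + 1)) := by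
  have hu : (2 * mh + 1) * (2 * mh + 1)⁻¹ = 1 := mul_inv_cancel₀ hne
  constructor <;> (simp only [div_eq_mul_inv, mul_inv]; linear_combination (π / 2) * hu)

/-- The numerical radius of a bounded linear operator. -/
noncomputable def nrad {X : Type*} [NormedAddCommGroup X] [NormedSpace ℝ X]
    (T : X →L[ℝ] X) : ℝ :=
  sSup {r : ℝ | ∃ x : X, ∃ f : X →L[ℝ] ℝ, ‖x‖ = 1 ∧ ‖f‖ = 1 ∧ f x = 1 ∧ r = |f (T x)|}

/-- Vertices of the right prism over the regular 2n-gon: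
`(cos((j-1)π/n), sin((j-1)π/n), ±1)`, `j = 1, …, 2n`. -/
def prismVerts (n : ℕ) : Set (Fin 3 → ℝ) :=
  {p | ∃ j : Fin (2 * n),
    p = ![Real.cos (j * π / n), Real.sin (j * π / n), 1] ∨
    p = ![Real.cos (j * π / n), Real.sin (j * π / n), -1]}

set_option maxHeartbeats 1000000 in
theorem stmt_19 {X : Type*} [NormedAddCommGroup X] [NormedSpace ℝ X]
    (n : ℕ) (hn : 1 ≤ n) (hodd : Odd n)
    (e : X ≃ₗ[ℝ] (Fin 3 → ℝ))
    (hball : closedBall (0 : X) 1 = e ⁻¹' (convexHull ℝ (prismVerts n)))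
    (T : X →L[ℝ] X)
    (hT : ∀ j : Fin (2 * n),
      e (T (e.symm ![Real.cos (j * π / n), Real.sin (j * π / n), 1])) =
        ![-Real.sin (j * π / n) * Real.cos (π / (2 * n)),
          Real.cos (j * π / n) * Real.cos (π / (2 * n)),
          Real.sin (π / (2 * n))]) :
    ‖T‖ = 1 ∧ nrad T = Real.sin (π / (2 * n)) := by
  classical
  have hπ := Real.pi_pos
  haveI : FiniteDimensional ℝ X := e.symm.finiteDimensional
  have hmem : ∀ x : X, ‖x‖ ≤ 1 ↔ e x ∈ convexHull ℝ (prismVerts n) := by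
    intro x
    rw [← mem_closedBall_zero_iff, hball, Set.mem_preimage]
  -- rule out n = 1
  by_cases hone : n = 1
  · exfalso
    subst hone
    have hplane : convexHull ℝ (prismVerts 1) ⊆ {p : Fin 3 → ℝ | p 1 = 0} := by
      apply convexHull_min
      · rintro p ⟨j, hp | hp⟩ <;>
        · subst hp
          have hs : Real.sin ((j:ℝ) * π / (1:ℕ)) = 0 := by
            have h' : ((j:ℕ):ℝ) * π / ((1:ℕ):ℝ) = (j:ℕ) * π := by norm_num
            rw [h']
            exact Real.sin_nat_mul_pi _
          simp [hs]
      · exact convex_hyperplane (LinearMap.proj (1 : Fin 3)).isLinear 0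
    set y := e.symm ![(0:ℝ),1,0] with hy
    have hy0 : y ≠ 0 := by
      rw [hy]
      simp only [ne_eq, LinearEquiv.map_eq_zero_iff]
      intro h
      have := congrFun h 1
      norm_num at this
    have hyn : 0 < ‖y‖ := norm_pos_iff.2 hy0
    have hx1 : ‖(‖y‖⁻¹ • y)‖ ≤ 1 := by
      rw [norm_smul, norm_inv, norm_norm, inv_mul_cancel₀ hyn.ne']
    have hxh := (hmem _).1 hx1
    have := hplane hxh
    simp only [Set.mem_setOf_eq, map_smul] at this
    rw [hy, LinearEquiv.apply_symm_apply] at this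
    simp [hyn.ne'] at this
  -- main case : n ≥ 3
  obtain ⟨mhalf, hmhalf⟩ := hodd
  have hn3 : 3 ≤ n := by omega
  have hn' : (0:ℝ) < n := by exact_mod_cast (by omega : 0 < n)
  have hnne : (n:ℝ) ≠ 0 := hn'.ne'
  -- notation
  obtain ⟨cφ, hcφ⟩ : ∃ a, a = Real.cos (π / (2 * (n:ℝ))) := ⟨_, rfl⟩
  obtain ⟨sφ, hsφ⟩ : ∃ a, a = Real.sin (π / (2 * (n:ℝ))) := ⟨_, rfl⟩
  rw [← hcφ, ← hsφ] at hT
  rw [show Real.sin (π / (2 * (n:ℝ))) = sφ from hsφ.symm]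
  have hφpos : 0 < π / (2 * (n:ℝ)) := by positivity
  have hc3 : (3:ℝ) ≤ (n:ℝ) := by exact_mod_cast hn3
  have hφlt : π / (2 * (n:ℝ)) < π / 2 := by
    rw [div_lt_div_iff₀ (by positivity) (by norm_num)]
    nlinarith [mul_nonneg hπ.le (sub_nonneg.2 hc3)]
  have hcpos : 0 < cφ := by
    rw [hcφ]; exact Real.cos_pos_of_mem_Ioo ⟨by linarith, hφlt⟩
  have hspos : 0 < sφ := by
    rw [hsφ]; exact Real.sin_pos_of_pos_of_lt_pi hφpos (by linarith)
  have hsle : sφ ≤ 1 := by rw [hsφ]; exact Real.sin_le_one _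
  have hA2B : π / (n:ℝ) = 2 * (π / (2 * (n:ℝ))) := by field_simp
  have hsinA : Real.sin (π / (n:ℝ)) = 2 * sφ * cφ := by
    rw [hsφ, hcφ, hA2B, Real.sin_two_mul]
  have hcosA : Real.cos (π / (n:ℝ)) = 1 - 2 * sφ ^ 2 := by
    rw [hsφ, hA2B, Real.cos_two_mul]
    have := Real.sin_sq_add_cos_sq (π / (2 * (n:ℝ)))
    linarith
  have hsaA : Real.sin (π / (n:ℝ)) ≠ 0 := by
    rw [hsinA]; positivity
  have hcaA : Real.cos (π / (n:ℝ)) ≠ 1 := by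
    rw [hcosA]; nlinarith [hspos]
  -- the concrete operator
  set M : (Fin 3 → ℝ) →ₗ[ℝ] (Fin 3 → ℝ) := Mlm19 cφ sφ with hM
  set L : (Fin 3 → ℝ) →ₗ[ℝ] (Fin 3 → ℝ) :=
    (e.toLinearMap.comp (T : X →ₗ[ℝ] X)).comp e.symm.toLinearMap with hL
  have hLapp : ∀ p, L p = e (T (e.symm p)) := fun p => rfl
  have htop : ∀ jv : ℕ, ∀ h : jv < 2 * n,
      L ![Real.cos ((jv:ℝ) * (π / n)), Real.sin ((jv:ℝ) * (π / n)), 1] =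
      M ![Real.cos ((jv:ℝ) * (π / n)), Real.sin ((jv:ℝ) * (π / n)), 1] := by
    intro jv h
    have hj' : e (T (e.symm ![Real.cos ((jv:ℝ) * π / n), Real.sin ((jv:ℝ) * π / n), 1])) =
        ![-Real.sin ((jv:ℝ) * π / n) * cφ, Real.cos ((jv:ℝ) * π / n) * cφ, sφ] := hT ⟨jv, h⟩
    rw [mul_div_assoc] at hj'
    rw [hLapp, hj', hM, Mlm19_apply]
    funext i
    fin_cases i <;> norm_num <;> simp
  have h0 := htop 0 (by omega)
  have h1 := htop 1 (by omega)
  have h2 := htop 2 (by omega)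
  norm_num at h0 h1 h2
  have hLM : ∀ p, L p = M p := span19 (π / n) L M hsaA hcaA h0 h1 h2
  have hMT : ∀ x : X, e (T x) = M (e x) := by
    intro x
    have := hLM (e x)
    rw [hLapp] at this
    rwa [LinearEquiv.symm_apply_apply] at this
  -- vertex handling helpers
  have hvform : ∀ v ∈ prismVerts n, ∃ (jv : ℕ) (h : jv < 2 * n) (ε : ℝ),
      (ε = 1 ∨ ε = -1) ∧ v = ![Real.cos ((jv:ℝ) * π / n), Real.sin ((jv:ℝ) * π / n), ε] := by
    rintro v ⟨j, hv | hv⟩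
    · exact ⟨j.1, j.2, 1, Or.inl rfl, hv⟩
    · exact ⟨j.1, j.2, -1, Or.inr rfl, hv⟩
  have hvmem : ∀ (jv : ℕ) (h : jv < 2 * n) (ε : ℝ), (ε = 1 ∨ ε = -1) →
      ![Real.cos ((jv:ℝ) * π / n), Real.sin ((jv:ℝ) * π / n), ε] ∈ prismVerts n := by
    intro jv h ε hε
    refine ⟨⟨jv, h⟩, ?_⟩
    rcases hε with rfl | rfl
    · left; rfl
    · right; rfl
  have hvmemZ : ∀ (k : ℤ) (ε : ℝ), (ε = 1 ∨ ε = -1) →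
      ![Real.cos ((k:ℝ) * π / n), Real.sin ((k:ℝ) * π / n), ε] ∈ prismVerts n := by
    intro k ε hε
    obtain ⟨j, hc, hs⟩ := finAngle19 n (by omega) k
    refine ⟨j, ?_⟩
    rcases hε with rfl | rfl
    · left; rw [hc, hs]
    · right; rw [hc, hs]
  have hmr : (n:ℝ) = 2 * (mhalf:ℝ) + 1 := by exact_mod_cast hmhalf
  have hdenm : (2 * (mhalf:ℝ) + 1) ≠ 0 := by positivity
  -- images of vertices lie in the hull
  have hLemA : ∀ v ∈ prismVerts n, M v ∈ convexHull ℝ (prismVerts n) := by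
    intro v hv
    obtain ⟨jv, hjv, ε, hε, rfl⟩ := hvform v hv
    have hw1 := hvmemZ ((jv:ℤ) + mhalf) 1 (Or.inl rfl)
    have hw2 := hvmemZ ((jv:ℤ) + mhalf + 1) 1 (Or.inl rfl)
    have hw3 := hvmemZ ((jv:ℤ) + mhalf) (-1) (Or.inr rfl)
    have hw4 := hvmemZ ((jv:ℤ) + mhalf + 1) (-1) (Or.inr rfl)
    have hconv := convex_convexHull ℝ (prismVerts n)
    have hsub := subset_convexHull ℝ (prismVerts n)
    have hq1 := hconv (hsub hw1) (hsub hw2) (by norm_num) (by norm_num)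
      (by norm_num : (1:ℝ)/2 + 1/2 = 1)
    have hq2 := hconv (hsub hw3) (hsub hw4) (by norm_num) (by norm_num)
      (by norm_num : (1:ℝ)/2 + 1/2 = 1)
    have ha : (0:ℝ) ≤ (1 + ε * sφ)/2 := by
      rcases hε with rfl | rfl <;> nlinarith [hspos, hsle]
    have hb : (0:ℝ) ≤ (1 - ε * sφ)/2 := by
      rcases hε with rfl | rfl <;> nlinarith [hspos, hsle]
    have hab : (1 + ε * sφ)/2 + (1 - ε * sφ)/2 = 1 := by ring
    have hq := hconv hq1 hq2 ha hb hab
    -- angle identities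
    have hha := halfAngle19 (mhalf:ℝ) (by rw [← hmr]; exact hnne) (jv:ℝ)
    rw [← hmr] at hha
    have hang1 : (((jv:ℤ) + mhalf : ℤ) : ℝ) * π / n =
        ((jv:ℝ) * π / n + π/2) - π/(2*(n:ℝ)) := by
      push_cast
      rw [hha.1]
    have hang2 : (((jv:ℤ) + mhalf + 1 : ℤ) : ℝ) * π / n =
        ((jv:ℝ) * π / n + π/2) + π/(2*(n:ℝ)) := by
      push_cast
      rw [hha.2]
    have hc1 : Real.cos ((((jv:ℤ) + mhalf : ℤ)) * π / n) =
        -Real.sin ((jv:ℝ)*π/n) * cφ + Real.cos ((jv:ℝ)*π/n) * sφ := by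
      rw [show (((jv:ℤ) + mhalf : ℤ) : ℝ) * π / (n:ℝ) = (((jv:ℤ) + mhalf : ℤ) : ℝ) * π / n from rfl]
      rw [hang1, Real.cos_sub, Real.cos_add_pi_div_two, Real.sin_add_pi_div_two, ← hcφ, ← hsφ]
    have hs1 : Real.sin ((((jv:ℤ) + mhalf : ℤ)) * π / n) =
        Real.cos ((jv:ℝ)*π/n) * cφ + Real.sin ((jv:ℝ)*π/n) * sφ := by
      rw [hang1, Real.sin_sub, Real.cos_add_pi_div_two, Real.sin_add_pi_div_two, ← hcφ, ← hsφ]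
      try ring
    have hc2 : Real.cos ((((jv:ℤ) + mhalf + 1 : ℤ)) * π / n) =
        -Real.sin ((jv:ℝ)*π/n) * cφ - Real.cos ((jv:ℝ)*π/n) * sφ := by
      rw [hang2, Real.cos_add, Real.cos_add_pi_div_two, Real.sin_add_pi_div_two, ← hcφ, ← hsφ]
      try ring
    have hs2 : Real.sin ((((jv:ℤ) + mhalf + 1 : ℤ)) * π / n) =
        Real.cos ((jv:ℝ)*π/n) * cφ - Real.sin ((jv:ℝ)*π/n) * sφ := by
      rw [hang2, Real.sin_add, Real.cos_add_pi_div_two, Real.sin_add_pi_div_two, ← hcφ, ← hsφ]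
      try ring
    have heq : M ![Real.cos ((jv:ℝ)*π/n), Real.sin ((jv:ℝ)*π/n), ε] =
        ((1 + ε * sφ)/2) •
          ((1/2 : ℝ) • ![Real.cos (((jv:ℤ) + mhalf : ℤ) * π / n),
              Real.sin (((jv:ℤ) + mhalf : ℤ) * π / n), (1:ℝ)] +
           (1/2 : ℝ) • ![Real.cos (((jv:ℤ) + mhalf + 1 : ℤ) * π / n),
              Real.sin (((jv:ℤ) + mhalf + 1 : ℤ) * π / n), (1:ℝ)]) +
        ((1 - ε * sφ)/2) •
          ((1/2 : ℝ) • ![Real.cos (((jv:ℤ) + mhalf : ℤ) * π / n),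
              Real.sin (((jv:ℤ) + mhalf : ℤ) * π / n), (-1:ℝ)] +
           (1/2 : ℝ) • ![Real.cos (((jv:ℤ) + mhalf + 1 : ℤ) * π / n),
              Real.sin (((jv:ℤ) + mhalf + 1 : ℤ) * π / n), (-1:ℝ)]) := by
      rw [hM, Mlm19_apply, hc1, hs1, hc2, hs2]
      funext i
      fin_cases i <;> simp <;> ring
    rw [heq]
    exact hq
  -- T maps the unit ball into itself
  have hMhull : ∀ q ∈ convexHull ℝ (prismVerts n), M q ∈ convexHull ℝ (prismVerts n) := by
    intro q hq
    have hsub2 : convexHull ℝ (prismVerts n) ⊆ ⇑M ⁻¹' (convexHull ℝ (prismVerts n)) :=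
      convexHull_min (fun v hv => hLemA v hv) ((convex_convexHull ℝ _).linear_preimage M)
    exact hsub2 hq
  have hTle1 : ∀ x : X, ‖x‖ ≤ 1 → ‖T x‖ ≤ 1 := by
    intro x hx
    refine (hmem (T x)).2 ?_
    rw [hMT]
    exact hMhull _ ((hmem x).1 hx)
  have hTle : ‖T‖ ≤ 1 := by
    refine T.opNorm_le_bound zero_le_one (fun x => ?_)
    rcases eq_or_ne x 0 with rfl | hx0
    · simp
    · have hpos : 0 < ‖x‖ := norm_pos_iff.2 hx0
      have h1 : ‖T (‖x‖⁻¹ • x)‖ ≤ 1 := hTle1 _ (by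
        rw [norm_smul, norm_inv, norm_norm, inv_mul_cancel₀ hpos.ne'])
      rw [map_smul, norm_smul, norm_inv, norm_norm] at h1
      rw [one_mul]
      calc ‖T x‖ = ‖x‖ * (‖x‖⁻¹ * ‖T x‖) := by field_simp
        _ ≤ ‖x‖ * 1 := mul_le_mul_of_nonneg_left h1 hpos.le
        _ = ‖x‖ := mul_one _
  -- functionals bounded on vertices have norm ≤ 1
  have hfun_le : ∀ g : X →L[ℝ] ℝ, (∀ v ∈ prismVerts n, |g (e.symm v)| ≤ 1) → ‖g‖ ≤ 1 := by
    intro g hgv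
    have hball1 : ∀ y : X, ‖y‖ ≤ 1 → |g y| ≤ 1 := by
      intro y hy
      have hsubC : convexHull ℝ (prismVerts n) ⊆
          ⇑((g : X →ₗ[ℝ] ℝ).comp e.symm.toLinearMap) ⁻¹' (Set.Icc (-1:ℝ) 1) := by
        apply convexHull_min
        · intro v hv
          rw [Set.mem_preimage]
          exact Set.mem_Icc.2 (abs_le.1 (hgv v hv))
        · exact (convex_Icc (-1:ℝ) 1).linear_preimage _
      have hyc := hsubC ((hmem y).1 hy)
      rw [Set.mem_preimage] at hyc
      have hyc2 : g (e.symm (e y)) ∈ Set.Icc (-1:ℝ) 1 := hyc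
      rw [LinearEquiv.symm_apply_apply] at hyc2
      exact abs_le.2 (Set.mem_Icc.1 hyc2)
    refine g.opNorm_le_bound zero_le_one (fun y => ?_)
    rcases eq_or_ne y 0 with rfl | hy0
    · simp
    · have hpos : 0 < ‖y‖ := norm_pos_iff.2 hy0
      have h1 := hball1 (‖y‖⁻¹ • y) (by
        rw [norm_smul, norm_inv, norm_norm, inv_mul_cancel₀ hpos.ne'])
      rw [map_smul, smul_eq_mul, abs_mul, abs_inv, abs_norm] at h1
      rw [Real.norm_eq_abs, one_mul]
      calc |g y| = ‖y‖ * (‖y‖⁻¹ * |g y|) := by field_simp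
        _ ≤ ‖y‖ * 1 := mul_le_mul_of_nonneg_left h1 hpos.le
        _ = ‖y‖ := mul_one _
  -- the witness point and functionals
  set x0 : X := e.symm ![1,0,1] with hx0
  have h00 := hvmem 0 (by omega) 1 (Or.inl rfl)
  norm_num at h00
  set f0 : X →L[ℝ] ℝ :=
    LinearMap.toContinuousLinearMap ((LinearMap.proj (2 : Fin 3)).comp e.toLinearMap) with hf0
  have hf0app : ∀ y : X, f0 y = e y 2 := fun y => rfl
  have hf0v : ∀ v ∈ prismVerts n, |f0 (e.symm v)| ≤ 1 := by
    intro v hv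
    obtain ⟨jv, hjv, ε, hε, rfl⟩ := hvform v hv
    rw [hf0app, LinearEquiv.apply_symm_apply]
    rcases hε with rfl | rfl <;> norm_num <;> simp
  have hf0le : ‖f0‖ ≤ 1 := hfun_le f0 hf0v
  have hx0le : ‖x0‖ ≤ 1 := (hmem x0).2 (by
    rw [hx0, LinearEquiv.apply_symm_apply]
    exact subset_convexHull ℝ _ h00)
  have hf0x0 : f0 x0 = 1 := by
    rw [hf0app, hx0, LinearEquiv.apply_symm_apply]
    simp
  have hx0n : ‖x0‖ = 1 := by
    refine le_antisymm hx0le ?_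
    have h1 := f0.le_opNorm x0
    rw [hf0x0] at h1
    have h2 : (1:ℝ) ≤ ‖f0‖ * ‖x0‖ := by simpa using h1
    nlinarith [norm_nonneg x0]
  have hf0n : ‖f0‖ = 1 := by
    refine le_antisymm hf0le ?_
    have h1 := f0.le_opNorm x0
    rw [hf0x0, hx0n] at h1
    simpa using h1
  have hf0Tx0 : f0 (T x0) = sφ := by
    rw [hf0app, hMT, hx0, LinearEquiv.apply_symm_apply, hM, Mlm19_apply]
    simp
  -- the second functional for ‖T‖ ≥ 1
  set f1 : X →L[ℝ] ℝ :=
    LinearMap.toContinuousLinearMap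
      (cφ⁻¹ • ((LinearMap.proj (1 : Fin 3)).comp e.toLinearMap)) with hf1
  have hf1app : ∀ y : X, f1 y = cφ⁻¹ * e y 1 := fun y => rfl
  have hf1v : ∀ v ∈ prismVerts n, |f1 (e.symm v)| ≤ 1 := by
    intro v hv
    obtain ⟨jv, hjv, ε, hε, rfl⟩ := hvform v hv
    rw [hf1app, LinearEquiv.apply_symm_apply]
    have hcomp : (![Real.cos ((jv:ℝ)*π/n), Real.sin ((jv:ℝ)*π/n), ε]) 1
        = Real.sin ((jv:ℝ)*π/n) := rfl
    rw [hcomp, abs_mul, abs_inv, abs_of_pos hcpos]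
    have hsb := sinBound19 n ⟨mhalf, hmhalf⟩ jv hjv
    rw [← hcφ] at hsb
    calc cφ⁻¹ * |Real.sin ((jv:ℝ)*π/n)| ≤ cφ⁻¹ * cφ :=
          mul_le_mul_of_nonneg_left hsb (inv_nonneg.2 hcpos.le)
      _ = 1 := inv_mul_cancel₀ hcpos.ne'
  have hf1le : ‖f1‖ ≤ 1 := hfun_le f1 hf1v
  have hf1Tx0 : f1 (T x0) = 1 := by
    rw [hf1app, hMT, hx0, LinearEquiv.apply_symm_apply, hM, Mlm19_apply]
    show cφ⁻¹ * (1 * cφ) = 1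
    rw [one_mul, inv_mul_cancel₀ hcpos.ne']
  have hTge : (1:ℝ) ≤ ‖T‖ := by
    have h1 := f1.le_opNorm (T x0)
    rw [hf1Tx0] at h1
    have h2 := T.le_opNorm x0
    rw [hx0n, mul_one] at h2
    have h3 : (1:ℝ) ≤ ‖f1‖ * ‖T x0‖ := by simpa using h1
    nlinarith [norm_nonneg (T x0)]
  -- numerical radius : upper bound
  have hub : ∀ r ∈ {r : ℝ | ∃ x : X, ∃ f : X →L[ℝ] ℝ,
      ‖x‖ = 1 ∧ ‖f‖ = 1 ∧ f x = 1 ∧ r = |f (T x)|}, r ≤ sφ := by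
    rintro r ⟨x, f, hx, hf, hfx, rfl⟩
    set g : (Fin 3 → ℝ) →ₗ[ℝ] ℝ := (f : X →ₗ[ℝ] ℝ).comp e.symm.toLinearMap with hgdef
    have hgapp : ∀ p, g p = f (e.symm p) := fun p => rfl
    obtain ⟨α, hα⟩ : ∃ a, a = g ![(1:ℝ),0,0] := ⟨_, rfl⟩
    obtain ⟨β, hβ⟩ : ∃ a, a = g ![(0:ℝ),1,0] := ⟨_, rfl⟩
    obtain ⟨γ, hγ⟩ : ∃ a, a = g ![(0:ℝ),0,1] := ⟨_, rfl⟩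
    have hgform : ∀ p : Fin 3 → ℝ, g p = α * p 0 + β * p 1 + γ * p 2 := by
      intro p
      conv_lhs => rw [vecDecomp19 p]
      rw [map_add, map_add, map_smul, map_smul, map_smul, hα, hβ, hγ]
      simp only [smul_eq_mul]
      ring
    have hvb : ∀ v ∈ prismVerts n, |g v| ≤ 1 := by
      intro v hv
      rw [hgapp]
      have h1 : ‖e.symm v‖ ≤ 1 := (hmem _).2 (by
        rw [LinearEquiv.apply_symm_apply]; exact subset_convexHull ℝ _ hv)
      have h2 := f.le_opNorm (e.symm v)
      rw [hf, Real.norm_eq_abs, one_mul] at h2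
      linarith
    have H1 : ∀ k : ℤ, |α * Real.cos ((k:ℝ)*π/n) + β * Real.sin ((k:ℝ)*π/n)| + |γ| ≤ 1 := by
      intro k
      have hvp := hvb _ (hvmemZ k 1 (Or.inl rfl))
      have hvm := hvb _ (hvmemZ k (-1) (Or.inr rfl))
      have hvp2 : g ![Real.cos ((k:ℝ)*π/n), Real.sin ((k:ℝ)*π/n), (1:ℝ)]
          = α * Real.cos ((k:ℝ)*π/n) + β * Real.sin ((k:ℝ)*π/n) + γ * 1 := hgform _
      have hvm2 : g ![Real.cos ((k:ℝ)*π/n), Real.sin ((k:ℝ)*π/n), (-1:ℝ)]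
          = α * Real.cos ((k:ℝ)*π/n) + β * Real.sin ((k:ℝ)*π/n) + γ * (-1) := hgform _
      rw [hvp2] at hvp
      rw [hvm2] at hvm
      apply absAdd19
      · rw [show α * Real.cos ((k:ℝ)*π/n) + β * Real.sin ((k:ℝ)*π/n) + γ
            = α * Real.cos ((k:ℝ)*π/n) + β * Real.sin ((k:ℝ)*π/n) + γ * 1 from by ring]
        exact hvp
      · rw [show α * Real.cos ((k:ℝ)*π/n) + β * Real.sin ((k:ℝ)*π/n) - γ
            = α * Real.cos ((k:ℝ)*π/n) + β * Real.sin ((k:ℝ)*π/n) + γ * (-1) from by ring]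
        exact hvm
    -- key estimate at vertices supporting x
    have hkey : ∀ v ∈ prismVerts n, g v = 1 → |g (M v)| ≤ sφ := by
      intro v hv hg1
      obtain ⟨jv, hjv, ε, hε, rfl⟩ := hvform v hv
      have hgv2 : g ![Real.cos ((jv:ℝ)*π/n), Real.sin ((jv:ℝ)*π/n), ε]
          = α * Real.cos ((jv:ℝ)*π/n) + β * Real.sin ((jv:ℝ)*π/n) + γ * ε := hgform _
      have hg1' : α * Real.cos ((jv:ℝ)*π/n) + β * Real.sin ((jv:ℝ)*π/n) + γ * ε = 1 := by
        rw [← hgv2]; exact hg1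
      have hu0 := H1 (jv : ℤ)
      push_cast at hu0
      have hp1 := H1 ((jv:ℤ) + 1)
      have hm1 := H1 ((jv:ℤ) - 1)
      push_cast at hp1 hm1
      have hexp1 : ((jv:ℝ)+1)*π/n = (jv:ℝ)*π/n + π/n := by ring
      have hexp2 : ((jv:ℝ)-1)*π/n = (jv:ℝ)*π/n - π/n := by ring
      rw [hexp1, Real.cos_add, Real.sin_add, hsinA, hcosA] at hp1
      rw [hexp2, Real.cos_sub, Real.sin_sub, hsinA, hcosA] at hm1
      obtain ⟨c, hc⟩ : ∃ a, a = Real.cos ((jv:ℝ)*π/n) := ⟨_, rfl⟩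
      obtain ⟨s, hs⟩ : ∃ a, a = Real.sin ((jv:ℝ)*π/n) := ⟨_, rfl⟩
      rw [← hc, ← hs] at hg1' hgv2 hu0 hp1 hm1 ⊢
      rw [show α * (c * (1 - 2*sφ^2) - s * (2*sφ*cφ)) + β * (s * (1 - 2*sφ^2) + c * (2*sφ*cφ))
          = (α*c + β*s) * (1 - 2*sφ^2) + (β*c - α*s) * (2*sφ*cφ) from by ring] at hp1
      rw [show α * (c * (1 - 2*sφ^2) + s * (2*sφ*cφ)) + β * (s * (1 - 2*sφ^2) - c * (2*sφ*cφ))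
          = (α*c + β*s) * (1 - 2*sφ^2) - (β*c - α*s) * (2*sφ*cφ) from by ring] at hm1
      have hgMv : g (M ![c, s, ε]) = (β*c - α*s) * cφ + γ * ε * sφ := by
        rw [show g (M ![c, s, ε]) = α * (-(s) * cφ) + β * (c * cφ) + γ * (ε * sφ) from hgform _]
        ring
      rw [hgMv]
      -- pure algebra
      have hεabs : γ * ε ≤ |γ| := by
        rcases hε with rfl | rfl
        · rw [mul_one]; exact le_abs_self γ
        · rw [mul_neg_one]; exact neg_le_abs γ
      have hU1 : 1 - |γ| ≤ α*c + β*s := by linarith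
      have hU2 : α*c + β*s ≤ 1 - |γ| := le_trans (le_abs_self _) (by linarith)
      have hUeq : α*c + β*s = 1 - |γ| := le_antisymm hU2 hU1
      have hγε : γ * ε = |γ| := by linarith
      have hb2 : |β*c - α*s| * (2*sφ*cφ) ≤ (α*c + β*s) * (2*sφ^2) := by
        have hp1' : (α*c + β*s) * (1 - 2*sφ^2) + (β*c - α*s) * (2*sφ*cφ) ≤ 1 - |γ| :=
          le_trans (le_abs_self _) (by linarith)
        have hm1' : (α*c + β*s) * (1 - 2*sφ^2) - (β*c - α*s) * (2*sφ*cφ) ≤ 1 - |γ| :=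
          le_trans (le_abs_self _) (by linarith)
        have hring : (α*c + β*s) * (1 - 2*sφ^2)
            = (α*c + β*s) - (α*c + β*s) * (2*sφ^2) := by ring
        rcases abs_cases (β*c - α*s) with ⟨habs, _⟩ | ⟨habs, _⟩ <;> rw [habs] <;> linarith
      have hBc : |β*c - α*s| * cφ ≤ (α*c + β*s) * sφ := by
        have hb3 : 2*sφ*(|β*c - α*s| * cφ) ≤ 2*sφ*((α*c + β*s) * sφ) := by
          rw [show 2*sφ*(|β*c - α*s| * cφ) = |β*c - α*s| * (2*sφ*cφ) from by ring,
            show 2*sφ*((α*c + β*s) * sφ) = (α*c + β*s) * (2*sφ^2) from by ring]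
          exact hb2
        exact le_of_mul_le_mul_left hb3 (by linarith [hspos])
      calc |(β*c - α*s) * cφ + γ * ε * sφ|
          ≤ |(β*c - α*s) * cφ| + |γ * ε * sφ| := abs_add_le _ _
        _ = |β*c - α*s| * cφ + |γ| * sφ := by
            rw [abs_mul, abs_of_pos hcpos, show γ * ε * sφ = (γ*ε) * sφ from by ring,
              hγε, abs_mul, abs_abs, abs_of_pos hspos]
        _ ≤ sφ := by
            have hsum : (α*c + β*s) * sφ + (1 - (α*c + β*s)) * sφ = sφ := by ring
            have : |γ| * sφ = (1 - (α*c + β*s)) * sφ := by rw [hUeq]; ring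
            linarith
    -- decompose x as a convex combination of vertices
    have hxh := (hmem x).1 hx.le
    rw [convexHull_eq] at hxh
    obtain ⟨ι, t, w, z, hw0, hw1, hz, hcm⟩ := hxh
    rw [Finset.centerMass_eq_of_sum_1 _ _ hw1] at hcm
    have hfx' : ∑ i ∈ t, w i * g (z i) = 1 := by
      have hge : g (e x) = 1 := by
        rw [hgapp, LinearEquiv.symm_apply_apply]; exact hfx
      rw [← hcm, map_sum] at hge
      simpa only [map_smul, smul_eq_mul] using hge
    have hglez : ∀ i ∈ t, g (z i) ≤ 1 := fun i hi =>
      le_trans (le_abs_self _) (hvb _ (hz i hi))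
    have hzero : ∀ i ∈ t, w i * (1 - g (z i)) = 0 := by
      have hsum0 : ∑ i ∈ t, w i * (1 - g (z i)) = 0 := by
        have hrw : ∑ i ∈ t, w i * (1 - g (z i))
            = (∑ i ∈ t, w i) - ∑ i ∈ t, w i * g (z i) := by
          rw [← Finset.sum_sub_distrib]
          exact Finset.sum_congr rfl (fun i _ => by ring)
        rw [hrw, hw1, hfx']; ring
      exact fun i hi => (Finset.sum_eq_zero_iff_of_nonneg
        (fun i hi => mul_nonneg (hw0 i hi) (by linarith [hglez i hi]))).1 hsum0 i hi
    have hfTx : f (T x) = ∑ i ∈ t, w i * g (M (z i)) := by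
      have h1 : g (e (T x)) = f (T x) := by rw [hgapp, LinearEquiv.symm_apply_apply]
      rw [← h1, hMT, ← hcm]
      simp only [map_sum, map_smul, smul_eq_mul]
    rw [hfTx]
    calc |∑ i ∈ t, w i * g (M (z i))|
        ≤ ∑ i ∈ t, |w i * g (M (z i))| := Finset.abs_sum_le_sum_abs _ _
      _ ≤ ∑ i ∈ t, w i * sφ := by
          apply Finset.sum_le_sum
          intro i hi
          rw [abs_mul, abs_of_nonneg (hw0 i hi)]
          rcases eq_or_ne (w i) 0 with h0 | h0
          · rw [h0]; simp
          · have hz1 : g (z i) = 1 := by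
              rcases mul_eq_zero.1 (hzero i hi) with h | h
              · exact absurd h h0
              · linarith
            exact mul_le_mul_of_nonneg_left (hkey _ (hz i hi) hz1) (hw0 i hi)
      _ = sφ := by rw [← Finset.sum_mul, hw1, one_mul]
  have hgreat : IsGreatest {r : ℝ | ∃ x : X, ∃ f : X →L[ℝ] ℝ,
      ‖x‖ = 1 ∧ ‖f‖ = 1 ∧ f x = 1 ∧ r = |f (T x)|} sφ :=
    ⟨⟨x0, f0, hx0n, hf0n, hf0x0, by rw [hf0Tx0, abs_of_pos hspos]⟩, hub⟩
  exact ⟨le_antisymm hTle hTge, hgreat.csSup_eq⟩
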